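/- arXiv:1502.00665 — 2 statements merged into one kernel-verified Lean document; each statement's English description precedes it below -/
import Mathlib

section
/- There exists an absolute constant C > 0 such that for all integers s, d with 1 ≤ s ≤ d and all σ > 0, the estimator L̂ defined by L̂(y) = Σ_{j=1}^d y_j·1{|y_j| > σ√(2 log(1+d/s²))} if s < √d, and L̂(y) = Σ_{j=1}^d y_j if s ≥ √d, satisfies sup_{θ ∈ B_0(s)} E_θ (L̂(y) − L(θ))² ≤ C σ² s² log(1 + d/s²). -/
open MeasureTheory ProbabilityTheory Real
open scoped ENNReal NNReal BigOperators

noncomputable section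

/-- The Gaussian product measure `N(θ, σ² I_d)` on `ℝ^d = Fin d → ℝ`: the law of the
observation `y = θ + σ ξ` with `ξ` having i.i.d. standard normal coordinates. -/
def gaussPi (d : ℕ) (σ : ℝ) (θ : Fin d → ℝ) : Measure (Fin d → ℝ) :=
  Measure.pi fun j => gaussianReal (θ j) (Real.toNNReal (σ ^ 2))

/-- Expected squared error `E_θ (T(y) - t)²` (under `P_θ = N(θ, σ² I_d)`) of the
estimator `T` for the target value `t`, as a Lebesgue integral with values in `[0,∞]`. -/
def sqRisk (d : ℕ) (σ : ℝ) (θ : Fin d → ℝ) (T : (Fin d → ℝ) → ℝ) (t : ℝ) : ℝ≥0∞ :=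
  ∫⁻ y, ENNReal.ofReal ((T y - t) ^ 2) ∂(gaussPi d σ θ)


/-- The class `B_0(s)` of `s`-sparse vectors of `ℝ^d`. -/
def B0 (d s : ℕ) : Set (Fin d → ℝ) := {θ | Nat.card {j // θ j ≠ 0} ≤ s}

/-- The estimator `L̂` of the linear functional: hard thresholding at level
`σ √(2 log(1+d/s²))` if `s < √d`, and the full sum of the observations if `s ≥ √d`. -/
def hatL (d s : ℕ) (σ : ℝ) (y : Fin d → ℝ) : ℝ :=
  if (s : ℝ) < Real.sqrt d then
    ∑ j, if σ * Real.sqrt (2 * Real.log (1 + (d : ℝ) / (s : ℝ) ^ 2)) < |y j| then y j else 0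
  else ∑ j, y j

end


noncomputable section AuxProof
open Set

theorem my_integrable_pi_prod {n : ℕ} (μ : Fin n → Measure ℝ) [∀ i, IsProbabilityMeasure (μ i)]
    {f : Fin n → ℝ → ℝ} (hf : ∀ i, Integrable (f i) (μ i)) :
    Integrable (fun (x : Fin n → ℝ) ↦ ∏ i, f i (x i)) (Measure.pi μ) := by
  induction n with
  | zero =>
      simp only [Finset.univ_eq_empty, Finset.prod_empty]
      exact integrable_const _
  | succ n n_ih =>
      have := ((measurePreserving_piFinSuccAbove μ 0).symm)
      rw [← this.integrable_comp_emb (MeasurableEquiv.measurableEmbedding _)]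
      simp_rw [MeasurableEquiv.piFinSuccAbove_symm_apply, Fin.insertNthEquiv,
        Fin.prod_univ_succ, Fin.insertNth_zero, cast_eq]
      simp only [Fin.zero_succAbove, Function.comp_def, Fin.cons_zero, Fin.cons_succ,
        Equiv.coe_fn_mk]
      have : Integrable (fun (x : (j : Fin n) → ℝ) ↦ ∏ j, f (Fin.succ j) (x j))
          (Measure.pi fun j ↦ μ (Fin.succ j)) := n_ih _ (fun i ↦ hf _)
      exact Integrable.mul_prod (hf 0) this

theorem my_integral_pi_prod {n : ℕ} (μ : Fin n → Measure ℝ) [∀ i, IsProbabilityMeasure (μ i)]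
    (f : Fin n → ℝ → ℝ) :
    ∫ x : Fin n → ℝ, ∏ i, f i (x i) ∂(Measure.pi μ) = ∏ i, ∫ x, f i x ∂(μ i) := by
  induction n with
  | zero => simp
  | succ n n_ih =>
      calc
        _ = ∫ x : ℝ × (Fin n → ℝ),
            f 0 x.1 * ∏ i : Fin n, f (Fin.succ i) (x.2 i)
              ∂((μ 0).prod (Measure.pi fun j ↦ μ (Fin.succ j))) := by
          rw [← ((measurePreserving_piFinSuccAbove μ 0).symm).integral_comp']
          simp_rw [MeasurableEquiv.piFinSuccAbove_symm_apply, Fin.insertNthEquiv,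
            Fin.prod_univ_succ, Fin.insertNth_zero, Equiv.coe_fn_mk, Fin.cons_succ,
            Fin.zero_succAbove, Fin.cons_zero, cast_eq]
        _ = (∫ x, f 0 x ∂(μ 0)) * ∏ i : Fin n, ∫ x, f (Fin.succ i) x ∂(μ (Fin.succ i)) := by
          rw [← n_ih, ← integral_prod_mul]
        _ = ∏ i, ∫ x, f i x ∂(μ i) := by rw [Fin.prod_univ_succ]

theorem my_comp_eval {n : ℕ} (μ : Fin n → Measure ℝ) [∀ i, IsProbabilityMeasure (μ i)]
    (j : Fin n) {g : ℝ → ℝ} (hg : Integrable g (μ j)) :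
    Integrable (fun y : Fin n → ℝ => g (y j)) (Measure.pi μ) ∧
      ∫ y : Fin n → ℝ, g (y j) ∂(Measure.pi μ) = ∫ x, g x ∂(μ j) := by
  set G : Fin n → ℝ → ℝ := fun i => if i = j then g else fun _ => 1 with hG
  have hGint : ∀ i, Integrable (G i) (μ i) := by
    intro i
    by_cases h : i = j
    · subst h; simpa [hG] using hg
    · simp [hG, h]
  have hprod : ∀ y : Fin n → ℝ, (∏ i, G i (y i)) = g (y j) := by
    intro y
    have : ∀ i, G i (y i) = if i = j then g (y i) else 1 := by
      intro i; by_cases h : i = j <;> simp [hG, h]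
    simp_rw [this]
    simp [Finset.prod_ite_eq']
  constructor
  · have := my_integrable_pi_prod μ hGint
    refine this.congr ?_
    exact Filter.Eventually.of_forall fun y => (hprod y)
  · have := my_integral_pi_prod μ G
    have h2 : ∫ y : Fin n → ℝ, g (y j) ∂(Measure.pi μ)
        = ∫ y : Fin n → ℝ, ∏ i, G i (y i) ∂(Measure.pi μ) := by
      congr 1; funext y; rw [hprod y]
    rw [h2, this]
    have : ∀ i, (∫ x, G i x ∂(μ i)) = if i = j then ∫ x, g x ∂(μ j) else 1 := by
      intro i
      by_cases h : i = j
      · subst h; simp [hG]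
      · simp [hG, h]
    simp_rw [this]
    simp [Finset.prod_ite_eq']

theorem my_comp_eval2 {n : ℕ} (μ : Fin n → Measure ℝ) [∀ i, IsProbabilityMeasure (μ i)]
    {j k : Fin n} (hjk : j ≠ k) {g h : ℝ → ℝ} (hg : Integrable g (μ j))
    (hh : Integrable h (μ k)) :
    Integrable (fun y : Fin n → ℝ => g (y j) * h (y k)) (Measure.pi μ) ∧
      ∫ y : Fin n → ℝ, g (y j) * h (y k) ∂(Measure.pi μ)
        = (∫ x, g x ∂(μ j)) * ∫ x, h x ∂(μ k) := by
  set G : Fin n → ℝ → ℝ := fun i => if i = j then g else if i = k then h else fun _ => 1 with hG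
  have hGj : G j = g := by simp [hG]
  have hGk : G k = h := by simp [hG, hjk.symm]
  have hGo : ∀ i, i ≠ j → i ≠ k → G i = fun _ => 1 := by
    intro i h1 h2; simp [hG, h1, h2]
  have hGint : ∀ i, Integrable (G i) (μ i) := by
    intro i
    by_cases h1 : i = j
    · subst h1; simpa [hGj] using hg
    · by_cases h2 : i = k
      · subst h2; simpa [hGk] using hh
      · simp [hGo i h1 h2]
  have key : ∀ F : Fin n → ℝ, (∀ i, i ≠ j → i ≠ k → F i = 1) → ∏ i, F i = F j * F k := by
    intro F hF
    have hk' : k ∈ Finset.univ.erase j := by simp [hjk.symm]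
    rw [← Finset.mul_prod_erase Finset.univ F (Finset.mem_univ j),
      ← Finset.mul_prod_erase _ F hk', Finset.prod_eq_one, mul_one]
    intro i hi
    simp only [Finset.mem_erase] at hi
    exact hF i hi.2.1 hi.1
  have hprod : ∀ y : Fin n → ℝ, (∏ i, G i (y i)) = g (y j) * h (y k) := by
    intro y
    have := key (fun i => G i (y i)) (by intro i h1 h2; simp [hGo i h1 h2])
    simpa [hGj, hGk] using this
  constructor
  · exact (my_integrable_pi_prod μ hGint).congr
      (Filter.Eventually.of_forall fun y => (hprod y))
  · have h2 : ∫ y : Fin n → ℝ, g (y j) * h (y k) ∂(Measure.pi μ)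
        = ∫ y : Fin n → ℝ, ∏ i, G i (y i) ∂(Measure.pi μ) := by
      congr 1; funext y; rw [hprod y]
    rw [h2, my_integral_pi_prod μ G]
    have := key (fun i => ∫ x, G i x ∂(μ i)) (by
      intro i h1 h2
      simp [hGo i h1 h2])
    simpa [hGj, hGk] using this

theorem my_expansion {n : ℕ} (μ : Fin n → Measure ℝ) [∀ i, IsProbabilityMeasure (μ i)]
    (f : Fin n → ℝ → ℝ)
    (h1 : ∀ i, Integrable (f i) (μ i)) (h2 : ∀ i, Integrable (fun x => (f i x)^2) (μ i)) :
    Integrable (fun y : Fin n → ℝ => (∑ i, f i (y i))^2) (Measure.pi μ) ∧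
    ∫ y : Fin n → ℝ, (∑ i, f i (y i))^2 ∂(Measure.pi μ)
      ≤ ∑ i, ∫ x, (f i x)^2 ∂(μ i) + (∑ i, ∫ x, f i x ∂(μ i))^2 := by
  have hsq : ∀ y : Fin n → ℝ, (∑ i, f i (y i))^2 = ∑ j, ∑ k, f j (y j) * f k (y k) := by
    intro y; rw [sq, Finset.sum_mul_sum]
  have hterm : ∀ j k : Fin n, Integrable (fun y : Fin n → ℝ => f j (y j) * f k (y k))
      (Measure.pi μ) ∧ ∫ y : Fin n → ℝ, f j (y j) * f k (y k) ∂(Measure.pi μ)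
        = if j = k then ∫ x, (f j x)^2 ∂(μ j) else (∫ x, f j x ∂(μ j)) * ∫ x, f k x ∂(μ k) := by
    intro j k
    by_cases h : j = k
    · subst h
      have := my_comp_eval μ j (g := fun x => (f j x)^2) (h2 j)
      simp only [if_pos rfl]
      refine ⟨this.1.congr (Filter.Eventually.of_forall fun y => by simp [sq]), ?_⟩
      rw [← this.2]; congr 1; funext y; simp [sq]
    · simpa [h] using my_comp_eval2 μ h (h1 j) (h1 k)
  constructor
  · have hI : Integrable (fun y : Fin n → ℝ => ∑ j, ∑ k, f j (y j) * f k (y k))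
        (Measure.pi μ) :=
      integrable_finset_sum _ fun j _ => integrable_finset_sum _ fun k _ => (hterm j k).1
    exact hI.congr (Filter.Eventually.of_forall fun y => (hsq y).symm)
  · have hint : ∫ y : Fin n → ℝ, (∑ i, f i (y i))^2 ∂(Measure.pi μ)
        = ∑ j, ∑ k, (if j = k then ∫ x, (f j x)^2 ∂(μ j)
            else (∫ x, f j x ∂(μ j)) * ∫ x, f k x ∂(μ k)) := by
      calc ∫ y : Fin n → ℝ, (∑ i, f i (y i))^2 ∂(Measure.pi μ)
          = ∫ y : Fin n → ℝ, ∑ j, ∑ k, f j (y j) * f k (y k) ∂(Measure.pi μ) := by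
            congr 1; funext y; exact hsq y
        _ = ∑ j, ∫ y : Fin n → ℝ, ∑ k, f j (y j) * f k (y k) ∂(Measure.pi μ) :=
            integral_finset_sum _ fun j _ => integrable_finset_sum _ fun k _ => (hterm j k).1
        _ = ∑ j, ∑ k, ∫ y : Fin n → ℝ, f j (y j) * f k (y k) ∂(Measure.pi μ) :=
            Finset.sum_congr rfl fun j _ => integral_finset_sum _ fun k _ => (hterm j k).1
        _ = _ := Finset.sum_congr rfl fun j _ => Finset.sum_congr rfl fun k _ => (hterm j k).2
    rw [hint]
    set m : Fin n → ℝ := fun j => ∫ x, f j x ∂(μ j) with hm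
    set q : Fin n → ℝ := fun j => ∫ x, (f j x)^2 ∂(μ j) with hq
    have step : ∀ j k : Fin n, (if j = k then q j else m j * m k)
        = m j * m k + (if j = k then q j - m j^2 else 0) := by
      intro j k; by_cases h : j = k
      · subst h; simp [sq]
      · simp [h]
    calc ∑ j, ∑ k, (if j = k then q j else m j * m k)
        = ∑ j, ∑ k, (m j * m k + (if j = k then q j - m j^2 else 0)) := by
          refine Finset.sum_congr rfl fun j _ => Finset.sum_congr rfl fun k _ => step j k
      _ = (∑ j, m j)^2 + ∑ j, (q j - m j^2) := by
          rw [sq, Finset.sum_mul_sum]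
          rw [← Finset.sum_add_distrib]
          refine Finset.sum_congr rfl fun j _ => ?_
          rw [Finset.sum_add_distrib, Finset.sum_ite_eq]
          simp
      _ ≤ (∑ j, m j)^2 + ∑ j, q j :=
          add_le_add_right (Finset.sum_le_sum fun j _ => sub_le_self _ (sq_nonneg (m j))) _
      _ = ∑ j, q j + (∑ j, m j)^2 := by ring


lemma gauss01_eq : gaussianReal 0 1
    = volume.withDensity (fun x => ((gaussianPDFReal 0 1 x).toNNReal : ℝ≥0∞)) := by
  rw [gaussianReal_of_var_ne_zero 0 one_ne_zero]
  rfl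

lemma pdf0_nonneg (x : ℝ) : 0 ≤ gaussianPDFReal 0 1 x := gaussianPDFReal_nonneg 0 1 x

lemma pdf0_eq (x : ℝ) : gaussianPDFReal 0 1 x = (Real.sqrt (2*π))⁻¹ * rexp (-x^2/2) := by
  simp [gaussianPDFReal]

lemma integral_gauss01 (g : ℝ → ℝ) :
    ∫ x, g x ∂(gaussianReal 0 1) = ∫ x, gaussianPDFReal 0 1 x * g x := by
  rw [gauss01_eq, integral_withDensity_eq_integral_smul
    (measurable_gaussianPDFReal 0 1).real_toNNReal g]
  congr 1
  funext x
  simp only [NNReal.smul_def, Real.coe_toNNReal _ (pdf0_nonneg x), smul_eq_mul]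

lemma integrable_gauss01_iff {g : ℝ → ℝ} :
    Integrable g (gaussianReal 0 1)
      ↔ Integrable (fun x => gaussianPDFReal 0 1 x * g x) volume := by
  rw [gauss01_eq, integrable_withDensity_iff_integrable_smul
    (measurable_gaussianPDFReal 0 1).real_toNNReal]
  constructor <;> intro h <;> refine h.congr (Filter.Eventually.of_forall fun x => ?_) <;>
    simp only [NNReal.smul_def, Real.coe_toNNReal _ (pdf0_nonneg x), smul_eq_mul]

lemma int_sq_exp : Integrable (fun x : ℝ => x^2 * rexp (-x^2/2)) volume := by
  have h := integrable_rpow_mul_exp_neg_mul_sq (b := (1:ℝ)/2) (by norm_num)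
    (s := ((2:ℕ):ℝ)) (by norm_num)
  refine h.congr (Filter.Eventually.of_forall fun x => ?_)
  simp only [Real.rpow_natCast]
  have h2 : -(1/2 : ℝ) * x^2 = -x^2/2 := by ring
  rw [h2]

lemma G_int_sq : Integrable (fun u : ℝ => u^2) (gaussianReal 0 1) := by
  rw [integrable_gauss01_iff]
  refine (int_sq_exp.const_mul ((Real.sqrt (2*π))⁻¹)).congr
    (Filter.Eventually.of_forall fun x => ?_)
  simp only [pdf0_eq]; ring

lemma G_dominated {g : ℝ → ℝ} (hg : Measurable g) (c₁ c₂ : ℝ)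
    (hb : ∀ u, |g u| ≤ c₁ + c₂ * u^2) : Integrable g (gaussianReal 0 1) := by
  have hint : Integrable (fun u : ℝ => c₁ + c₂ * u^2) (gaussianReal 0 1) :=
    (integrable_const c₁).add (G_int_sq.const_mul c₂)
  exact hint.mono' hg.aestronglyMeasurable (Filter.Eventually.of_forall fun u => hb u)

lemma G_odd {g : ℝ → ℝ} (hg : Integrable g (gaussianReal 0 1))
    (hodd : ∀ u, g (-u) = - g u) : ∫ u, g u ∂(gaussianReal 0 1) = 0 := by
  have hmp : MeasurePreserving (fun x : ℝ => -x) volume volume :=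
    Measure.measurePreserving_neg volume
  have hemb : MeasurableEmbedding (fun x : ℝ => -x) :=
    (Homeomorph.neg ℝ).measurableEmbedding
  have h1 : ∫ x, gaussianPDFReal 0 1 x * g x
      = ∫ x, gaussianPDFReal 0 1 (-x) * g (-x) := by
    rw [hmp.integral_comp hemb (fun x => gaussianPDFReal 0 1 x * g x)]
  have h2 : ∀ x : ℝ, gaussianPDFReal 0 1 (-x) * g (-x)
      = - (gaussianPDFReal 0 1 x * g x) := by
    intro x
    rw [hodd x, pdf0_eq, pdf0_eq, neg_sq]
    ring
  rw [integral_gauss01]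
  have : ∫ x, gaussianPDFReal 0 1 x * g x = - ∫ x, gaussianPDFReal 0 1 x * g x := by
    nth_rewrite 1 [h1]
    rw [show (fun x : ℝ => gaussianPDFReal 0 1 (-x) * g (-x))
      = fun x => - (gaussianPDFReal 0 1 x * g x) from funext h2]
    exact integral_neg _
  linarith

lemma sqrt_two_pi_ge_two : (2:ℝ) ≤ Real.sqrt (2*π) := by
  have : (4:ℝ) ≤ 2*π := by nlinarith [Real.pi_gt_three]
  nlinarith [Real.sq_sqrt (by positivity : (0:ℝ) ≤ 2*π),
    Real.sqrt_nonneg (2*π)]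

lemma G_mean_sq : ∫ u, u^2 ∂(gaussianReal 0 1) ≤ 3 := by
  rw [integral_gauss01]
  have hpt : ∀ x : ℝ, gaussianPDFReal 0 1 x * x^2
      ≤ (Real.sqrt (2*π))⁻¹ * (2 * rexp (-(4⁻¹) * x^2)) := by
    intro x
    rw [pdf0_eq]
    have h0 : (0:ℝ) ≤ (Real.sqrt (2*π))⁻¹ := by positivity
    have key : x^2 * rexp (-x^2/2) ≤ 2 * rexp (-(4⁻¹) * x^2) := by
      set t := x^2/4 with ht
      have htn : 0 ≤ t := by positivity
      have h1 : t/2 + 1 ≤ rexp (t/2) := by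
        have := Real.add_one_le_exp (t/2); linarith
      have h2 : rexp (t/2) * rexp (t/2) = rexp t := by
        rw [← Real.exp_add]; ring_nf
      have h3 : 2*t ≤ rexp t := by nlinarith [Real.exp_pos (t/2), sq_nonneg (t/2 - 1)]
      have h4 : rexp (-x^2/2) = rexp (-(4⁻¹)*x^2) * rexp (-t) := by
        rw [← Real.exp_add]; congr 1; rw [ht]; ring
      rw [h4, ← mul_assoc]
      have h5 : x^2 * rexp (-(4⁻¹)*x^2) * rexp (-t) ≤ 2 * rexp (-(4⁻¹)*x^2) := by
        have h6 : x^2 * rexp (-t) ≤ 2 := by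
          rw [Real.exp_neg]
          have he : 0 < rexp t := Real.exp_pos t
          rw [show x^2 = 4*t by rw [ht]; ring]
          calc 4*t * (rexp t)⁻¹ ≤ 2 * rexp t * (rexp t)⁻¹ := by
                apply mul_le_mul_of_nonneg_right (by linarith) (by positivity)
            _ = 2 := by field_simp
        calc x^2 * rexp (-(4⁻¹)*x^2) * rexp (-t)
            = (x^2 * rexp (-t)) * rexp (-(4⁻¹)*x^2) := by ring
          _ ≤ 2 * rexp (-(4⁻¹)*x^2) := by
              apply mul_le_mul_of_nonneg_right h6 (Real.exp_pos _).le
      exact h5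
    calc (Real.sqrt (2*π))⁻¹ * rexp (-x^2/2) * x^2
        = (Real.sqrt (2*π))⁻¹ * (x^2 * rexp (-x^2/2)) := by ring
      _ ≤ (Real.sqrt (2*π))⁻¹ * (2 * rexp (-(4⁻¹) * x^2)) := by
          apply mul_le_mul_of_nonneg_left key h0
  have hintL : Integrable (fun x : ℝ => gaussianPDFReal 0 1 x * x^2) volume := by
    refine (int_sq_exp.const_mul ((Real.sqrt (2*π))⁻¹)).congr
      (Filter.Eventually.of_forall fun x => ?_)
    simp only [pdf0_eq]; ring
  have hintR : Integrable (fun x : ℝ => (Real.sqrt (2*π))⁻¹ * (2 * rexp (-(4⁻¹) * x^2)))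
      volume := by
    exact ((integrable_exp_neg_mul_sq (by norm_num : (0:ℝ) < 4⁻¹)).const_mul 2).const_mul _
  calc ∫ x, gaussianPDFReal 0 1 x * x^2
      ≤ ∫ x, (Real.sqrt (2*π))⁻¹ * (2 * rexp (-(4⁻¹) * x^2)) :=
        integral_mono hintL hintR hpt
    _ = (Real.sqrt (2*π))⁻¹ * (2 * Real.sqrt (π/4⁻¹)) := by
        rw [integral_const_mul, integral_const_mul, integral_gaussian]
    _ ≤ 3 := by
        have h1 : Real.sqrt (π/4⁻¹) = Real.sqrt (4*π) := by norm_num; ring_nf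
        rw [h1]
        have h2 : (0:ℝ) < Real.sqrt (2*π) := by positivity
        rw [inv_mul_le_iff₀ h2]
        have h3 : Real.sqrt (4*π) ^ 2 = 4*π := Real.sq_sqrt (by positivity)
        have h4 : Real.sqrt (2*π) ^ 2 = 2*π := Real.sq_sqrt (by positivity)
        nlinarith [Real.sqrt_nonneg (4*π), Real.sqrt_nonneg (2*π), Real.pi_pos]


lemma exp_neg_integrableOn_Ioi' : IntegrableOn (fun t : ℝ => rexp (-t)) (Ioi (0:ℝ)) := by
  simpa using exp_neg_integrableOn_Ioi 0 (by norm_num : (0:ℝ) < 1)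

lemma sq_exp_neg_integrableOn_Ioi :
    IntegrableOn (fun t : ℝ => t^2 * rexp (-t)) (Ioi (0:ℝ)) := by
  have h := Real.GammaIntegral_convergent (by norm_num : (0:ℝ) < 3)
  refine h.congr_fun (fun t ht => ?_) measurableSet_Ioi
  rw [show ((3:ℝ) - 1) = ((2:ℕ):ℝ) by norm_num]
  simp only [Real.rpow_natCast]
  ring

lemma integral_sq_exp_neg_Ioi : ∫ t in Ioi (0:ℝ), t^2 * rexp (-t) = 2 := by
  have h := Real.Gamma_eq_integral (by norm_num : (0:ℝ) < 3)
  have h2 : Real.Gamma 3 = 2 := by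
    rw [show (3:ℝ) = (2:ℕ) + 1 by norm_num, Real.Gamma_nat_eq_factorial]
    norm_num
  have h3 : ∫ t in Ioi (0:ℝ), t^2 * rexp (-t)
      = ∫ x in Ioi (0:ℝ), rexp (-x) * x ^ ((3:ℝ)-1) := by
    refine setIntegral_congr_fun measurableSet_Ioi (fun t ht => ?_)
    rw [show ((3:ℝ) - 1) = ((2:ℕ):ℝ) by norm_num, Real.rpow_natCast]
    ring
  rw [h3, ← h, h2]

lemma G_tail {a : ℝ} (ha : 1 ≤ a) :
    ∫ u, (if a < |u| then u^2 else 0) ∂(gaussianReal 0 1)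
      ≤ (2*a^2 + 4) * rexp (-a^2/2) := by
  have ha0 : 0 < a := lt_of_lt_of_le one_pos ha
  set c : ℝ := (Real.sqrt (2*π))⁻¹ with hc
  have hc0 : 0 ≤ c := by positivity
  set G : ℝ → ℝ := fun t => t^2 * (c * rexp (-t^2/2)) with hG
  set F : ℝ → ℝ := fun t => if a < t then G t else 0 with hF
  rw [integral_gauss01]
  have habs : ∀ x : ℝ, gaussianPDFReal 0 1 x * (if a < |x| then x^2 else 0) = F |x| := by
    intro x
    rw [pdf0_eq, hF]
    by_cases h : a < |x|
    · simp only [if_pos h, hG, sq_abs]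
      ring
    · simp [h]
  calc ∫ x, gaussianPDFReal 0 1 x * (if a < |x| then x^2 else 0)
      = ∫ x, F |x| := by congr 1; funext x; exact habs x
    _ = 2 * ∫ t in Ioi (0:ℝ), F t := integral_comp_abs
    _ = 2 * ∫ t in Ioi a, G t := by
        congr 1
        have hFind : ∀ t : ℝ, F t = Set.indicator (Ioi a) G t := by
          intro t
          rw [Set.indicator_apply, hF]
          simp [Set.mem_Ioi]
        rw [show (fun t => F t) = Set.indicator (Ioi a) G from funext hFind]
        rw [setIntegral_indicator measurableSet_Ioi]
        congr 1
        rw [Set.Ioi_inter_Ioi, max_eq_right ha0.le]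
    _ = 2 * ∫ t in Ioi (0:ℝ), G (t + a) := by
        congr 1
        have hemb : MeasurableEmbedding (fun x : ℝ => x + a) :=
          (Homeomorph.addRight a).measurableEmbedding
        have := hemb.setIntegral_map (μ := volume) G (Ioi a)
        rw [map_add_right_eq_self volume a] at this
        rw [this]
        congr 1
        ext x
        simp [Set.mem_Ioi]
    _ ≤ 2 * ∫ t in Ioi (0:ℝ), c * ((2*a^2 + 2*t^2) * rexp (-a^2/2) * rexp (-t)) := by
        have hRint : IntegrableOn
            (fun t : ℝ => c * ((2*a^2 + 2*t^2) * rexp (-a^2/2) * rexp (-t))) (Ioi 0) := by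
          have hsum : IntegrableOn (fun t : ℝ =>
              (c * rexp (-a^2/2) * (2*a^2)) * rexp (-t)
                + (c * rexp (-a^2/2) * 2) * (t^2 * rexp (-t))) (Ioi (0:ℝ)) :=
            (exp_neg_integrableOn_Ioi'.const_mul _).add
              (sq_exp_neg_integrableOn_Ioi.const_mul _)
          exact IntegrableOn.congr_fun hsum (fun t _ => by ring) measurableSet_Ioi
        refine mul_le_mul_of_nonneg_left ?_ (by norm_num)
        refine integral_mono_of_nonneg ?_ hRint ?_
        · refine Filter.Eventually.of_forall (fun t => ?_)
          simp only [hG]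
          positivity
        · rw [Filter.EventuallyLE, ae_restrict_iff' measurableSet_Ioi]
          refine Filter.Eventually.of_forall (fun t ht => ?_)
          simp only [Set.mem_Ioi] at ht
          simp only [hG]
          have hsq : (t+a)^2 ≤ 2*a^2 + 2*t^2 := by nlinarith [sq_nonneg (t-a)]
          have hexp : rexp (-(t+a)^2/2) ≤ rexp (-a^2/2) * rexp (-t) := by
            rw [← Real.exp_add]
            apply Real.exp_le_exp.2
            nlinarith [ht.le, ha]
          calc (t+a)^2 * (c * rexp (-(t+a)^2/2))
              ≤ (2*a^2 + 2*t^2) * (c * (rexp (-a^2/2) * rexp (-t))) := by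
                apply mul_le_mul hsq ?_ (by positivity) (by positivity)
                exact mul_le_mul_of_nonneg_left hexp hc0
            _ = c * ((2*a^2 + 2*t^2) * rexp (-a^2/2) * rexp (-t)) := by ring
    _ = 2 * c * rexp (-a^2/2) * (2*a^2 * (∫ t in Ioi (0:ℝ), rexp (-t))
          + 2 * ∫ t in Ioi (0:ℝ), t^2 * rexp (-t)) := by
        rw [integral_const_mul]
        rw [show (fun t : ℝ => (2*a^2 + 2*t^2) * rexp (-a^2/2) * rexp (-t))
          = fun t : ℝ => rexp (-a^2/2) *
              (2*a^2 * rexp (-t) + 2 * (t^2 * rexp (-t))) from funext fun t => by ring]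
        rw [integral_const_mul, integral_add (exp_neg_integrableOn_Ioi'.const_mul _)
          (sq_exp_neg_integrableOn_Ioi.const_mul 2), integral_const_mul, integral_const_mul]
        ring
    _ ≤ (2*a^2 + 4) * rexp (-a^2/2) := by
        rw [integral_exp_neg_Ioi_zero, integral_sq_exp_neg_Ioi]
        have h2c : 2 * c ≤ 1 := by
          rw [hc]
          have := sqrt_two_pi_ge_two
          have hpos : (0:ℝ) < Real.sqrt (2*π) := by linarith
          rw [show (2:ℝ) * (Real.sqrt (2*π))⁻¹ = 2 / Real.sqrt (2*π) by ring]
          rw [div_le_one hpos]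
          exact this
        have he : 0 < rexp (-a^2/2) := Real.exp_pos _
        have hterm : 0 ≤ 2*a^2*1 + 2*2 := by positivity
        calc 2 * c * rexp (-a^2/2) * (2*a^2*1 + 2*2)
            ≤ 1 * rexp (-a^2/2) * (2*a^2*1 + 2*2) := by
              apply mul_le_mul_of_nonneg_right (mul_le_mul_of_nonneg_right h2c he.le) hterm
          _ = (2*a^2 + 4) * rexp (-a^2/2) := by ring


lemma gauss_affine {σ m : ℝ} (hσ : 0 < σ) :
    gaussianReal m (Real.toNNReal (σ^2)) = (gaussianReal 0 1).map (fun u => σ * u + m) := by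
  have h1 : (gaussianReal (0:ℝ) 1).map (σ * ·) = gaussianReal 0 (Real.toNNReal (σ^2)) := by
    rw [gaussianReal_map_const_mul σ]
    congr 1
    · ring
    · ext
      simp [Real.coe_toNNReal _ (sq_nonneg σ)]
  have h2 : ((gaussianReal (0:ℝ) 1).map (σ * ·)).map (· + m)
      = gaussianReal m (Real.toNNReal (σ^2)) := by
    rw [h1, gaussianReal_map_add_const m, zero_add]
  have h3 : Measure.map (fun x : ℝ => x + m) (Measure.map (fun x => σ * x) (gaussianReal 0 1))
      = Measure.map (fun u : ℝ => σ * u + m) (gaussianReal 0 1) := by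
    rw [Measure.map_map (measurable_add_const m) (measurable_const_mul σ)]
    rfl
  rw [← h2, h3]

lemma affine_meas {σ m : ℝ} : Measurable (fun u : ℝ => σ * u + m) :=
  (measurable_const_mul σ).add_const m

lemma affine_emb {σ m : ℝ} (hσ : 0 < σ) : MeasurableEmbedding (fun u : ℝ => σ * u + m) := by
  have h := ((Homeomorph.mulLeft₀ σ hσ.ne').trans
    (Homeomorph.addRight m)).measurableEmbedding
  convert h using 1
  ext u; simp

lemma integral_affine {σ m : ℝ} (hσ : 0 < σ) {g : ℝ → ℝ} (hg : Measurable g) :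
    ∫ x, g x ∂(gaussianReal m (Real.toNNReal (σ^2)))
      = ∫ u, g (σ*u+m) ∂(gaussianReal 0 1) := by
  rw [gauss_affine hσ, integral_map affine_meas.aemeasurable hg.aestronglyMeasurable]

lemma integrable_affine_iff {σ m : ℝ} (hσ : 0 < σ) {g : ℝ → ℝ} :
    Integrable g (gaussianReal m (Real.toNNReal (σ^2)))
      ↔ Integrable (fun u => g (σ*u+m)) (gaussianReal 0 1) := by
  rw [gauss_affine hσ, (affine_emb hσ).integrable_map_iff]
  exact Iff.rfl

lemma abs_le_one_add_sq (u : ℝ) : |u| ≤ 1 + u^2 := by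
  nlinarith [sq_nonneg (|u| - 1), sq_abs u, abs_nonneg u]

-- Case 2 coordinate facts
lemma coord_lin {σ m : ℝ} (hσ : 0 < σ) :
    Integrable (fun x => x - m) (gaussianReal m (Real.toNNReal (σ^2)))
    ∧ Integrable (fun x => (x-m)^2) (gaussianReal m (Real.toNNReal (σ^2)))
    ∧ ∫ x, (x - m) ∂(gaussianReal m (Real.toNNReal (σ^2))) = 0
    ∧ ∫ x, (x-m)^2 ∂(gaussianReal m (Real.toNNReal (σ^2))) ≤ 3*σ^2 := by
  have hmeas1 : Measurable (fun u : ℝ => (σ*u+m) - m) := affine_meas.sub_const m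
  have hint1 : Integrable (fun u : ℝ => (σ*u+m) - m) (gaussianReal 0 1) := by
    refine G_dominated hmeas1 σ σ (fun u => ?_)
    have h1 : (σ*u+m) - m = σ * u := by ring
    rw [h1, abs_mul, abs_of_pos hσ]
    nlinarith [abs_le_one_add_sq u, hσ.le]
  have hint2 : Integrable (fun u : ℝ => ((σ*u+m) - m)^2) (gaussianReal 0 1) := by
    refine G_dominated (hmeas1.pow_const 2) (σ^2) (σ^2) (fun u => ?_)
    have h1 : ((σ*u+m) - m)^2 = σ^2 * u^2 := by ring
    rw [h1, abs_of_nonneg (by positivity)]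
    nlinarith [sq_nonneg σ]
  refine ⟨(integrable_affine_iff hσ).2 hint1, (integrable_affine_iff hσ).2 hint2, ?_, ?_⟩
  · rw [integral_affine hσ (g := fun x => x - m) (by fun_prop)]
    refine G_odd hint1 (fun u => by ring)
  · rw [integral_affine hσ (g := fun x => (x - m)^2) (by fun_prop)]
    have h1 : (fun u : ℝ => ((σ*u+m) - m)^2) = fun u => σ^2 * u^2 :=
      funext fun u => by ring
    rw [h1, integral_const_mul]
    nlinarith [G_mean_sq, sq_nonneg σ]

-- The thresholding function
lemma eta_meas (τ : ℝ) : Measurable (fun x : ℝ => if τ < |x| then x else 0) :=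
  Measurable.ite (measurableSet_lt measurable_const measurable_abs)
    measurable_id measurable_const

lemma eta_abs_le (τ : ℝ) (x : ℝ) : |(if τ < |x| then x else 0)| ≤ |x| := by
  by_cases h : τ < |x| <;> simp [h, abs_nonneg]

lemma eta_sub_le {τ : ℝ} (hτ : 0 ≤ τ) (x : ℝ) :
    |(if τ < |x| then x else 0) - x| ≤ τ := by
  by_cases h : τ < |x|
  · simpa [h] using hτ
  · push_neg at h
    rw [if_neg (not_lt.mpr h), zero_sub, abs_neg]
    exact h

lemma coord_eta_int {σ a m : ℝ} (hσ : 0 < σ) :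
    Integrable (fun x => (if σ*a < |x| then x else 0) - m)
        (gaussianReal m (Real.toNNReal (σ^2)))
    ∧ Integrable (fun x => ((if σ*a < |x| then x else 0) - m)^2)
        (gaussianReal m (Real.toNNReal (σ^2))) := by
  set τ := σ * a
  set η : ℝ → ℝ := fun x => if τ < |x| then x else 0 with hη
  have hb : ∀ u : ℝ, |η (σ*u+m)| ≤ σ * |u| + |m| := by
    intro u
    refine le_trans (eta_abs_le τ _) ?_
    calc |σ*u+m| ≤ |σ*u| + |m| := abs_add_le _ _
      _ = σ * |u| + |m| := by rw [abs_mul, abs_of_pos hσ]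
  have hmeas : Measurable (fun u : ℝ => η (σ*u+m) - m) :=
    ((eta_meas τ).comp affine_meas).sub_const m
  constructor
  · refine (integrable_affine_iff hσ).2 (G_dominated hmeas (σ + 2*|m|) σ (fun u => ?_))
    have : |η (σ*u+m) - m| ≤ σ * |u| + 2*|m| := by
      calc |η (σ*u+m) - m| ≤ |η (σ*u+m)| + |m| := abs_sub _ _
        _ ≤ σ * |u| + |m| + |m| := by linarith [hb u]
        _ = σ * |u| + 2*|m| := by ring
    refine le_trans this ?_
    nlinarith [abs_le_one_add_sq u, hσ.le, abs_nonneg m]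
  · refine (integrable_affine_iff hσ).2
      (G_dominated (hmeas.pow_const 2) (8*m^2 + 2*σ^2) (2*σ^2) (fun u => ?_))
    have h1 : |η (σ*u+m) - m| ≤ σ * |u| + 2*|m| := by
      calc |η (σ*u+m) - m| ≤ |η (σ*u+m)| + |m| := abs_sub _ _
        _ ≤ σ * |u| + |m| + |m| := by linarith [hb u]
        _ = σ * |u| + 2*|m| := by ring
    rw [abs_of_nonneg (sq_nonneg _)]
    have h2 : (η (σ*u+m) - m)^2 ≤ (σ * |u| + 2*|m|)^2 := by
      have := abs_nonneg (η (σ*u+m) - m)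
      nlinarith [sq_abs (η (σ*u+m) - m)]
    refine le_trans h2 ?_
    nlinarith [sq_abs u, sq_abs m, abs_nonneg u, abs_nonneg m, hσ.le, sq_nonneg (σ*|u| - 2*|m|)]

lemma eta_odd (τ x : ℝ) : (if τ < |(-x)| then -x else 0) = -(if τ < |x| then x else 0) := by
  rw [abs_neg]; split <;> simp

lemma coord_eta_zero {σ a : ℝ} (hσ : 0 < σ) (ha : 1 ≤ a) :
    ∫ x, (if σ*a < |x| then x else 0) ∂(gaussianReal 0 (Real.toNNReal (σ^2))) = 0
    ∧ ∫ x, (if σ*a < |x| then x else 0)^2 ∂(gaussianReal 0 (Real.toNNReal (σ^2)))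
        ≤ σ^2 * ((2*a^2 + 4) * rexp (-a^2/2)) := by
  set τ := σ * a with hτdef
  have hcond : ∀ u : ℝ, (τ < |σ*u+0|) ↔ a < |u| := by
    intro u
    rw [add_zero, abs_mul, abs_of_pos hσ, hτdef]
    exact mul_lt_mul_iff_right₀ hσ
  constructor
  · rw [integral_affine hσ (g := fun x => if τ < |x| then x else 0) (eta_meas τ)]
    refine G_odd ?_ ?_
    · refine G_dominated ((eta_meas τ).comp affine_meas) σ σ (fun u => ?_)
      refine le_trans (eta_abs_le τ _) ?_
      rw [add_zero, abs_mul, abs_of_pos hσ]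
      nlinarith [abs_le_one_add_sq u, hσ.le]
    · intro u
      have harg : σ*(-u)+0 = -(σ*u+0) := by ring
      rw [harg, eta_odd]
  · rw [integral_affine hσ (g := fun x => (if τ < |x| then x else 0)^2)
      ((eta_meas τ).pow_const 2)]
    have hpt : ∀ u : ℝ, (if τ < |σ*u+0| then σ*u+0 else 0)^2
        = σ^2 * (if a < |u| then u^2 else 0) := by
      intro u
      by_cases h : a < |u|
      · rw [if_pos ((hcond u).2 h), if_pos h, add_zero]; ring
      · rw [if_neg (fun hh => h ((hcond u).1 hh)), if_neg h]; ring
    rw [show (fun u : ℝ => (if τ < |σ*u+0| then σ*u+0 else 0)^2)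
      = fun u => σ^2 * (if a < |u| then u^2 else 0) from funext hpt, integral_const_mul]
    exact mul_le_mul_of_nonneg_left (G_tail ha) (sq_nonneg σ)

lemma coord_eta_bias {σ a m : ℝ} (hσ : 0 < σ) (ha : 0 ≤ a) :
    |∫ x, ((if σ*a < |x| then x else 0) - m)
        ∂(gaussianReal m (Real.toNNReal (σ^2)))| ≤ σ*a := by
  set τ := σ * a with hτdef
  have hτ : 0 ≤ τ := mul_nonneg hσ.le ha
  set ν := gaussianReal m (Real.toNNReal (σ^2)) with hν
  set η : ℝ → ℝ := fun x => if τ < |x| then x else 0 with hη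
  have hint1 : Integrable (fun x => η x - m) ν := (coord_eta_int hσ).1
  have hlin := coord_lin (m := m) hσ
  have hdiff : Integrable (fun x => η x - x) ν := by
    refine (hint1.sub hlin.1).congr (Filter.Eventually.of_forall fun x => ?_)
    show (η x - m) - (x - m) = η x - x
    ring
  have hsplit : ∫ x, (η x - m) ∂ν = (∫ x, (η x - x) ∂ν) + ∫ x, (x - m) ∂ν := by
    rw [← integral_add hdiff hlin.1]
    congr 1; funext x; ring
  rw [hsplit, hlin.2.2.1, add_zero]
  calc |∫ x, (η x - x) ∂ν| ≤ ∫ x, |η x - x| ∂ν := by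
        simpa using norm_integral_le_integral_norm (μ := ν) (fun x => η x - x)
    _ ≤ ∫ _, τ ∂ν := by
        refine integral_mono hdiff.abs (integrable_const τ) (fun x => ?_)
        exact eta_sub_le hτ x
    _ = τ := by simp

lemma coord_eta_sq {σ a m : ℝ} (hσ : 0 < σ) (ha : 0 ≤ a) :
    ∫ x, ((if σ*a < |x| then x else 0) - m)^2 ∂(gaussianReal m (Real.toNNReal (σ^2)))
      ≤ 2*(σ*a)^2 + 6*σ^2 := by
  set τ := σ * a with hτdef
  have hτ : 0 ≤ τ := mul_nonneg hσ.le ha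
  set ν := gaussianReal m (Real.toNNReal (σ^2)) with hν
  set η : ℝ → ℝ := fun x => if τ < |x| then x else 0 with hη
  have hlin := coord_lin (m := m) hσ
  have hRint : Integrable (fun x => 2*τ^2 + 2*(x-m)^2) ν :=
    (integrable_const _).add (hlin.2.1.const_mul 2)
  have hpt : ∀ x : ℝ, (η x - m)^2 ≤ 2*τ^2 + 2*(x-m)^2 := by
    intro x
    have h1 : (η x - x)^2 ≤ τ^2 := by
      nlinarith [eta_sub_le hτ x, abs_nonneg (η x - x), sq_abs (η x - x)]
    nlinarith [sq_nonneg ((η x - x) - (x - m))]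
  calc ∫ x, (η x - m)^2 ∂ν ≤ ∫ x, (2*τ^2 + 2*(x-m)^2) ∂ν :=
        integral_mono (coord_eta_int hσ).2 hRint hpt
    _ = 2*τ^2 + 2 * ∫ x, (x-m)^2 ∂ν := by
        rw [integral_add (integrable_const _) (hlin.2.1.const_mul 2), integral_const,
          integral_const_mul]
        simp [hν]
    _ ≤ 2*τ^2 + 6*σ^2 := by nlinarith [hlin.2.2.2]


end AuxProof

set_option maxHeartbeats 1000000 in
/-- Theorem 2.1, upper bound: there is an absolute constant `C > 0` such that for all
`1 ≤ s ≤ d` and all `σ > 0`,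
`sup_{θ ∈ B_0(s)} E_θ (L̂(y) − L(θ))² ≤ C σ² s² log(1 + d/s²)`. -/
theorem linear_functional_upper_B0 :
    ∃ C : ℝ, 0 < C ∧ ∀ (s d : ℕ), 1 ≤ s → s ≤ d → ∀ σ : ℝ, 0 < σ →
      (⨆ θ ∈ B0 d s, sqRisk d σ θ (hatL d s σ) (∑ j, θ j))
        ≤ ENNReal.ofReal
            (C * (σ ^ 2 * (s : ℝ) ^ 2 * Real.log (1 + (d : ℝ) / (s : ℝ) ^ 2))) := by
  classical
  refine ⟨100, by norm_num, ?_⟩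
  intro s d hs hsd σ hσ
  set x : ℝ := (d : ℝ) / (s : ℝ) ^ 2 with hxdef
  set L : ℝ := Real.log (1 + x) with hLdef
  have hs1 : (1:ℝ) ≤ (s:ℝ) := by exact_mod_cast hs
  have hs0 : (0:ℝ) < (s:ℝ) := lt_of_lt_of_le one_pos hs1
  have hd1 : (1:ℝ) ≤ (d:ℝ) := by exact_mod_cast le_trans hs hsd
  have hx0 : 0 < x := by positivity
  have hL0 : 0 < L := Real.log_pos (by linarith)
  refine iSup₂_le fun θ hθ => ?_
  have hmemcard : (Finset.filter (fun j => θ j ≠ 0) Finset.univ).card ≤ s := by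
    have hcard : Nat.card {j // θ j ≠ 0}
        = (Finset.filter (fun j => θ j ≠ 0) Finset.univ).card := by
      rw [Nat.card_eq_fintype_card, Fintype.card_subtype]
    rw [← hcard]
    exact hθ
  set ν : Fin d → Measure ℝ := fun j => gaussianReal (θ j) (Real.toNNReal (σ^2)) with hν
  by_cases hcase : (s : ℝ) < Real.sqrt d
  · -- thresholding case
    set a : ℝ := Real.sqrt (2 * L) with hadef
    set τ : ℝ := σ * a with hτdef
    have ha2 : a^2 = 2*L := Real.sq_sqrt (by linarith)
    have hlog2 : Real.log 2 < L := by
      have hx1 : 1 < x := by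
        rw [hxdef, lt_div_iff₀ (by positivity)]
        have := Real.sq_sqrt (le_of_lt (lt_of_lt_of_le zero_lt_one hd1))
        nlinarith [Real.sqrt_nonneg (d:ℝ), hcase, hs0]
      exact Real.log_lt_log (by norm_num) (by linarith)
    have hL69 : (0.69:ℝ) < L :=
      lt_trans (lt_trans (by norm_num) Real.log_two_gt_d9) hlog2
    have ha1 : 1 ≤ a := by
      rw [hadef]
      rw [show (1:ℝ) = Real.sqrt 1 from (Real.sqrt_one).symm]
      exact Real.sqrt_le_sqrt (by linarith)
    have ha0 : 0 ≤ a := le_trans zero_le_one ha1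
    have hexpL : rexp (-a^2/2) = (1+x)⁻¹ := by
      rw [ha2, show -(2*L)/2 = -L by ring, Real.exp_neg, hLdef, Real.exp_log (by linarith)]
    set f : Fin d → ℝ → ℝ := fun j => fun z => (if τ < |z| then z else 0) - θ j with hf
    have h1 : ∀ j, Integrable (f j) (ν j) := fun j => (coord_eta_int hσ).1
    have h2 : ∀ j, Integrable (fun z => (f j z)^2) (ν j) := fun j => (coord_eta_int hσ).2
    have hexp := my_expansion ν f h1 h2
    have hH : ∀ y : Fin d → ℝ, hatL d s σ y - ∑ j, θ j = ∑ j, f j (y j) := by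
      intro y
      rw [hatL, if_pos hcase, ← Finset.sum_sub_distrib]
    have hrisk : sqRisk d σ θ (hatL d s σ) (∑ j, θ j)
        = ENNReal.ofReal (∫ y : Fin d → ℝ, (∑ j, f j (y j))^2 ∂(Measure.pi ν)) := by
      rw [sqRisk, gaussPi]
      rw [ofReal_integral_eq_lintegral_ofReal hexp.1
        (Filter.Eventually.of_forall fun y => sq_nonneg _)]
      congr 1
      funext y
      rw [hH y]
    rw [hrisk]
    refine ENNReal.ofReal_le_ofReal (le_trans hexp.2 ?_)
    -- numeric bound
    set S := Finset.filter (fun j => θ j ≠ 0) Finset.univ with hS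
    set Q : ℝ := σ^2 * ((2*a^2 + 4) * rexp (-a^2/2)) with hQ
    have hQ0 : 0 ≤ Q := by rw [hQ]; positivity
    have hsumsq : ∑ j, ∫ z, (f j z)^2 ∂(ν j) ≤ (d:ℝ) * Q + (s:ℝ) * (2*τ^2 + 6*σ^2) := by
      rw [← Finset.sum_filter_add_sum_filter_not Finset.univ (fun j => θ j ≠ 0)]
      have hA : ∑ j ∈ S, ∫ z, (f j z)^2 ∂(ν j) ≤ (s:ℝ) * (2*τ^2 + 6*σ^2) := by
        calc ∑ j ∈ S, ∫ z, (f j z)^2 ∂(ν j) ≤ ∑ _j ∈ S, (2*τ^2 + 6*σ^2) :=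
              Finset.sum_le_sum fun j _ => coord_eta_sq hσ ha0
          _ = (S.card : ℝ) * (2*τ^2 + 6*σ^2) := by
              rw [Finset.sum_const, nsmul_eq_mul]
          _ ≤ (s:ℝ) * (2*τ^2 + 6*σ^2) := by
              have : (S.card : ℝ) ≤ (s:ℝ) := by exact_mod_cast hmemcard
              have hpos : (0:ℝ) ≤ 2*τ^2 + 6*σ^2 := by positivity
              nlinarith
      have hB : ∑ j ∈ Finset.univ.filter (fun j => ¬ θ j ≠ 0), ∫ z, (f j z)^2 ∂(ν j)
          ≤ (d:ℝ) * Q := by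
        have hcardB : ((Finset.univ.filter (fun j => ¬ θ j ≠ 0)).card : ℝ) ≤ (d:ℝ) := by
          exact_mod_cast Finset.card_le_card (Finset.filter_subset _ _) |>.trans
            (le_of_eq (Finset.card_univ.trans (Fintype.card_fin d)))
        calc ∑ j ∈ Finset.univ.filter (fun j => ¬ θ j ≠ 0), ∫ z, (f j z)^2 ∂(ν j)
            ≤ ∑ _j ∈ Finset.univ.filter (fun j => ¬ θ j ≠ 0), Q := by
              refine Finset.sum_le_sum fun j hj => ?_
              simp only [Finset.mem_filter, not_not] at hj
              have hθj : θ j = 0 := hj.2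
              have h0 := (coord_eta_zero (a := a) hσ ha1).2
              rw [hν, hQ]
              simp only [hθj, hf, sub_zero]
              exact h0
          _ = ((Finset.univ.filter (fun j => ¬ θ j ≠ 0)).card : ℝ) * Q := by
              rw [Finset.sum_const, nsmul_eq_mul]
          _ ≤ (d:ℝ) * Q := by nlinarith
      linarith
    have hsummean : (∑ j, ∫ z, f j z ∂(ν j))^2 ≤ ((s:ℝ) * τ)^2 := by
      have habs : |∑ j, ∫ z, f j z ∂(ν j)| ≤ (s:ℝ) * τ := by
        rw [← Finset.sum_filter_add_sum_filter_not Finset.univ (fun j => θ j ≠ 0)]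
        have hB0 : ∑ j ∈ Finset.univ.filter (fun j => ¬ θ j ≠ 0), ∫ z, f j z ∂(ν j) = 0 := by
          refine Finset.sum_eq_zero fun j hj => ?_
          simp only [Finset.mem_filter, not_not] at hj
          have hθj : θ j = 0 := hj.2
          have := (coord_eta_zero (a := a) hσ ha1).1
          rw [hν]
          simp only [hθj, hf, sub_zero]
          exact this
        rw [hB0, add_zero]
        calc |∑ j ∈ S, ∫ z, f j z ∂(ν j)| ≤ ∑ j ∈ S, |∫ z, f j z ∂(ν j)| :=
              Finset.abs_sum_le_sum_abs _ _
          _ ≤ ∑ _j ∈ S, τ := Finset.sum_le_sum fun j _ => coord_eta_bias hσ ha0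
          _ = (S.card : ℝ) * τ := by rw [Finset.sum_const, nsmul_eq_mul]
          _ ≤ (s:ℝ) * τ := by
              have : (S.card : ℝ) ≤ (s:ℝ) := by exact_mod_cast hmemcard
              have hτ0 : 0 ≤ τ := mul_nonneg hσ.le ha0
              nlinarith
      calc (∑ j, ∫ z, f j z ∂(ν j))^2 = |∑ j, ∫ z, f j z ∂(ν j)|^2 := (sq_abs _).symm
        _ ≤ ((s:ℝ) * τ)^2 := by
            have h0 : 0 ≤ |∑ j, ∫ z, f j z ∂(ν j)| := abs_nonneg _
            nlinarith
    have hfinal : (d:ℝ) * Q + (s:ℝ) * (2*τ^2 + 6*σ^2) + ((s:ℝ)*τ)^2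
        ≤ 100 * (σ^2 * (s:ℝ)^2 * L) := by
      have hτ2 : τ^2 = σ^2 * (2*L) := by
        rw [hτdef, mul_pow, ha2]
      have hdQ : (d:ℝ) * Q ≤ σ^2 * (s:ℝ)^2 * (4*L + 4) := by
        rw [hQ, hexpL, ha2]
        have hd1x : (d:ℝ) * (1+x)⁻¹ ≤ (s:ℝ)^2 := by
          rw [← div_eq_mul_inv, div_le_iff₀ (by linarith)]
          have hsx : (s:ℝ)^2 * x = d := by
            rw [hxdef]; field_simp
          nlinarith [sq_nonneg (s:ℝ)]
        calc (d:ℝ) * (σ^2 * ((2*(2*L) + 4) * (1+x)⁻¹))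
            = (σ^2 * (4*L + 4)) * ((d:ℝ) * (1+x)⁻¹) := by ring
          _ ≤ (σ^2 * (4*L + 4)) * (s:ℝ)^2 := by
              have : (0:ℝ) ≤ σ^2 * (4*L+4) := by positivity
              nlinarith
          _ = σ^2 * (s:ℝ)^2 * (4*L + 4) := by ring
      have hss : (s:ℝ) ≤ (s:ℝ)^2 := by nlinarith
      have hmid : (s:ℝ) * (2*τ^2 + 6*σ^2) ≤ σ^2 * (s:ℝ)^2 * (4*L + 6) := by
        rw [hτ2]
        have h1 : (s:ℝ) * (2*(σ^2*(2*L)) + 6*σ^2) = (s:ℝ) * σ^2 * (4*L + 6) := by ring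
        rw [h1]
        have hc : (0:ℝ) ≤ σ^2 * (4*L+6) := by positivity
        nlinarith
      have hlast : ((s:ℝ)*τ)^2 = σ^2 * (s:ℝ)^2 * (2*L) := by
        rw [mul_pow, hτ2]; ring
      rw [hlast]
      have h10 : (4:ℝ)*L + 4 ≤ 10*L := by nlinarith
      have h13 : (4:ℝ)*L + 6 ≤ 13*L := by nlinarith
      have hP0 : (0:ℝ) ≤ σ^2 * (s:ℝ)^2 := by positivity
      nlinarith [mul_le_mul_of_nonneg_left h10 hP0, mul_le_mul_of_nonneg_left h13 hP0,
        mul_pos (mul_pos (pow_pos hσ 2) (pow_pos hs0 2)) hL0]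
    calc ∑ j, ∫ z, (f j z)^2 ∂(ν j) + (∑ j, ∫ z, f j z ∂(ν j))^2
        ≤ ((d:ℝ) * Q + (s:ℝ) * (2*τ^2 + 6*σ^2)) + ((s:ℝ)*τ)^2 :=
          add_le_add hsumsq hsummean
      _ ≤ 100 * (σ^2 * (s:ℝ)^2 * L) := by linarith [hfinal]
  · -- full-sum case
    set f : Fin d → ℝ → ℝ := fun j => fun z => z - θ j with hf
    have h1 : ∀ j, Integrable (f j) (ν j) := fun j => (coord_lin hσ).1
    have h2 : ∀ j, Integrable (fun z => (f j z)^2) (ν j) := fun j => (coord_lin hσ).2.1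
    have hexp := my_expansion ν f h1 h2
    have hH : ∀ y : Fin d → ℝ, hatL d s σ y - ∑ j, θ j = ∑ j, f j (y j) := by
      intro y
      rw [hatL, if_neg hcase, ← Finset.sum_sub_distrib]
    have hrisk : sqRisk d σ θ (hatL d s σ) (∑ j, θ j)
        = ENNReal.ofReal (∫ y : Fin d → ℝ, (∑ j, f j (y j))^2 ∂(Measure.pi ν)) := by
      rw [sqRisk, gaussPi]
      rw [ofReal_integral_eq_lintegral_ofReal hexp.1
        (Filter.Eventually.of_forall fun y => sq_nonneg _)]
      congr 1
      funext y
      rw [hH y]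
    rw [hrisk]
    refine ENNReal.ofReal_le_ofReal (le_trans hexp.2 ?_)
    have hds : (d:ℝ) ≤ (s:ℝ)^2 := by
      push_neg at hcase
      have h := Real.sq_sqrt (le_of_lt (lt_of_lt_of_le zero_lt_one hd1))
      nlinarith [Real.sqrt_nonneg (d:ℝ)]
    have hx1 : x ≤ 1 := by
      rw [hxdef, div_le_one (by positivity)]
      exact hds
    have hLlow : x / 2 ≤ L := by
      have h1 : Real.log (1+x)⁻¹ ≤ (1+x)⁻¹ - 1 :=
        Real.log_le_sub_one_of_pos (by positivity)
      rw [Real.log_inv] at h1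
      have h2 : 1 - (1+x)⁻¹ ≤ L := by rw [hLdef]; linarith
      have h3 : x / (1+x) ≤ L := by
        have : 1 - (1+x)⁻¹ = x / (1+x) := by field_simp; ring
        linarith [this ▸ h2]
      have h4 : x / 2 ≤ x / (1+x) := by
        apply div_le_div_of_nonneg_left hx0.le ?_ (by linarith)
        linarith
      linarith
    have hmeans : ∑ j, ∫ z, f j z ∂(ν j) = 0 :=
      Finset.sum_eq_zero fun j _ => (coord_lin hσ).2.2.1
    have hsumsq : ∑ j, ∫ z, (f j z)^2 ∂(ν j) ≤ (d:ℝ) * (3*σ^2) := by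
      calc ∑ j, ∫ z, (f j z)^2 ∂(ν j) ≤ ∑ _j : Fin d, 3*σ^2 :=
            Finset.sum_le_sum fun j _ => (coord_lin hσ).2.2.2
        _ = (d:ℝ) * (3*σ^2) := by
            rw [Finset.sum_const, nsmul_eq_mul, Finset.card_univ, Fintype.card_fin]
    rw [hmeans]
    have hfinal : (d:ℝ) * (3*σ^2) + 0^2 ≤ 100 * (σ^2 * (s:ℝ)^2 * L) := by
      have hsx : (s:ℝ)^2 * x = d := by rw [hxdef]; field_simp
      have h1 : (s:ℝ)^2 * L ≥ (s:ℝ)^2 * (x/2) :=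
        mul_le_mul_of_nonneg_left hLlow (by positivity)
      have h2 : (s:ℝ)^2 * (x/2) = (d:ℝ)/2 := by rw [← hsx]; ring
      nlinarith [sq_nonneg σ, pow_pos hσ 2]
    linarith [hsumsq, hfinal]
end

section
/- Let b > 0 and d ≥ 1 an integer. If κ > bσ with κ, σ > 0, then inf_{T̂} sup_{θ ∈ B_2(κ) ∩ B_0(1)} P_θ(|T̂(y) − Q(θ)| ≥ (3b/8)σκ) ≥ (1/4)·exp(−b²/4), where the infimum is over all Borel measurable estimators T̂ : ℝ^d → ℝ. -/
open MeasureTheory ProbabilityTheory Real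
open scoped ENNReal NNReal BigOperators

noncomputable section

/-- The Euclidean ball `B_2(κ) = {θ : ∑_j θ_j² ≤ κ²}`. -/
def B2 (d : ℕ) (κ : ℝ) : Set (Fin d → ℝ) := {θ | ∑ j, (θ j) ^ 2 ≤ κ ^ 2}

end

section Auxiliary

lemma ennreal_div_ne_top (a b : ℝ≥0∞) (ha : a ≠ ⊤) (hb : b ≠ 0) : a / b ≠ ⊤ :=
  (ENNReal.div_lt_top ha hb).ne

lemma ennreal_three_quarters : (3:ℝ≥0∞)/4 = 1/4 + 1/2 := by
  have f2 : (1:ℝ≥0∞)/4 ≠ ⊤ := ennreal_div_ne_top _ _ (by norm_num) (by norm_num)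
  have f3 : (1:ℝ≥0∞)/2 ≠ ⊤ := ennreal_div_ne_top _ _ (by norm_num) (by norm_num)
  refine (ENNReal.toReal_eq_toReal_iff' (ennreal_div_ne_top _ _ (by norm_num) (by norm_num))
    (ENNReal.add_ne_top.mpr ⟨f2, f3⟩)).mp ?_
  rw [ENNReal.toReal_add f2 f3]
  simp [ENNReal.toReal_div]
  norm_num

lemma ennreal_one_sub_quarter : (1:ℝ≥0∞) - 1/4 = 3/4 := by
  have f1 : (3:ℝ≥0∞)/4 ≠ ⊤ := ennreal_div_ne_top _ _ (by norm_num) (by norm_num)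
  have hle : (1:ℝ≥0∞)/4 ≤ 1 := by
    rw [ENNReal.div_le_iff (by norm_num) (by norm_num)]
    norm_num
  refine (ENNReal.toReal_eq_toReal_iff' (by simp [ENNReal.sub_ne_top]) f1).mp ?_
  rw [ENNReal.toReal_sub_of_le hle (by norm_num)]
  simp [ENNReal.toReal_div]
  norm_num

lemma lintegral_pi_prod' {n : ℕ} (μ : Fin n → Measure ℝ) [∀ i, SigmaFinite (μ i)]
    (f : Fin n → ℝ → ℝ≥0∞) (hf : ∀ i, Measurable (f i)) :
    ∫⁻ x, ∏ i, f i (x i) ∂Measure.pi μ = ∏ i, ∫⁻ x, f i x ∂μ i := by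
  induction n with
  | zero => simp [Measure.pi_of_empty]
  | succ n ih =>
    have hmp := (measurePreserving_piFinSuccAbove μ 0).symm
    rw [hmp.lintegral_map_equiv (fun x => ∏ i, f i (x i))
      (MeasurableEquiv.piFinSuccAbove (fun _ => ℝ) 0).symm]
    simp_rw [MeasurableEquiv.piFinSuccAbove_symm_apply, Fin.insertNthEquiv,
      Equiv.coe_fn_mk, Fin.insertNth_zero, Fin.prod_univ_succ, Fin.cons_zero, Fin.cons_succ,
      Fin.zero_succAbove, cast_eq]
    rw [lintegral_prod_mul (f := f 0) (g := fun z : Fin n → ℝ => ∏ i, f i.succ (z i))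
      (hf 0).aemeasurable
      (Measurable.aemeasurable (Finset.measurable_prod _ fun i _ => by
        exact (hf _).comp (measurable_pi_apply i)))]
    rw [ih (fun i => μ i.succ) (fun i => f i.succ) (fun i => hf _)]

lemma gaussPi_withDensity (d : ℕ) {σ : ℝ} (hσ : 0 < σ) (θ : Fin d → ℝ) :
    gaussPi d σ θ = (volume : Measure (Fin d → ℝ)).withDensity
      (fun y => ∏ j, gaussianPDF (θ j) (Real.toNNReal (σ ^ 2)) (y j)) := by
  have hv : Real.toNNReal (σ ^ 2) ≠ 0 := by
    simp [Real.toNNReal_eq_zero, not_le, pow_pos hσ, hσ.ne']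
  refine Measure.pi_eq fun s hs => ?_
  rw [withDensity_apply _ (MeasurableSet.univ_pi hs)]
  have hind : ∀ y : Fin d → ℝ, (Set.univ.pi s).indicator
        (fun y => ∏ j, gaussianPDF (θ j) (Real.toNNReal (σ ^ 2)) (y j)) y
      = ∏ j, (s j).indicator (gaussianPDF (θ j) (Real.toNNReal (σ ^ 2))) (y j) := by
    intro y
    by_cases hy : y ∈ Set.univ.pi s
    · rw [Set.indicator_of_mem hy]
      exact Finset.prod_congr rfl fun j _ =>
        (Set.indicator_of_mem (hy j (Set.mem_univ j)) _).symm
    · rw [Set.indicator_of_notMem hy]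
      rw [Set.mem_univ_pi] at hy
      push_neg at hy
      obtain ⟨j, hj⟩ := hy
      exact (Finset.prod_eq_zero (Finset.mem_univ j)
        (Set.indicator_of_notMem hj _)).symm
  rw [← lintegral_indicator (MeasurableSet.univ_pi hs)]
  simp_rw [hind]
  rw [volume_pi, lintegral_pi_prod' _ _
    (fun j => (measurable_gaussianPDF _ _).indicator (hs j))]
  exact Finset.prod_congr rfl fun j _ => by
    rw [lintegral_indicator (hs j), ← gaussianReal_apply _ hv]

lemma gaussianReal_Ioi_self (m : ℝ) {v : ℝ≥0} (hv : v ≠ 0) :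
    gaussianReal m v (Set.Ioi m) = 1 / 2 := by
  have h1 : (⟨(-1:ℝ)^2, sq_nonneg _⟩ : ℝ≥0) = 1 := by
    ext; norm_num
  have hmap : ((gaussianReal m v).map (fun x => -1 * x)).map (· + 2 * m)
      = gaussianReal m v := by
    rw [gaussianReal_map_const_mul, gaussianReal_map_add_const]
    congr 1
    · ring
    · ext; simp
  have hIoi : gaussianReal m v (Set.Ioi m) = gaussianReal m v (Set.Iio m) := by
    conv_lhs => rw [← hmap]
    rw [Measure.map_map (measurable_add_const _) (measurable_const_mul _),
      Measure.map_apply (by fun_prop) measurableSet_Ioi]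
    congr 1
    ext x
    simp only [Function.comp_apply, Set.mem_preimage, Set.mem_Ioi, Set.mem_Iio]
    constructor <;> intro h <;> linarith
  have hsing : gaussianReal m v {m} = 0 := by
    rw [gaussianReal_apply _ hv]
    simp
  have hIic : gaussianReal m v (Set.Iic m) = gaussianReal m v (Set.Ioi m) := by
    rw [← Set.Iio_union_right,
      measure_union (by simp [Set.disjoint_singleton_right]) (measurableSet_singleton m),
      hsing, add_zero, ← hIoi]
  have hcompl := prob_compl_eq_one_sub (μ := gaussianReal m v) (measurableSet_Iic (a := m))
  rw [Set.compl_Iic, hIic] at hcompl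
  have hle : gaussianReal m v (Set.Ioi m) ≤ 1 := prob_le_one
  have hsum : gaussianReal m v (Set.Ioi m) + gaussianReal m v (Set.Ioi m) = 1 := by
    nth_rewrite 1 [hcompl]
    exact tsub_add_cancel_of_le hle
  rw [ENNReal.eq_div_iff two_ne_zero (by norm_num), two_mul]
  exact hsum

lemma pdf_compare {b σ κ : ℝ} (hb : 0 < b) (hσ : 0 < σ) {x : ℝ} (hx : x ≤ κ) :
    ENNReal.ofReal (Real.exp (-b ^ 2 / 8)) * gaussianPDF κ (Real.toNNReal (σ ^ 2)) x
      ≤ gaussianPDF (κ - b * σ / 2) (Real.toNNReal (σ ^ 2)) x := by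
  rw [gaussianPDF, gaussianPDF, ← ENNReal.ofReal_mul (Real.exp_nonneg _)]
  apply ENNReal.ofReal_le_ofReal
  rw [gaussianPDFReal, gaussianPDFReal]
  have hvc : ((Real.toNNReal (σ ^ 2) : ℝ≥0) : ℝ) = σ ^ 2 :=
    Real.coe_toNNReal _ (sq_nonneg σ)
  rw [hvc]
  rw [← mul_assoc, mul_comm (Real.exp (-b ^ 2 / 8)), mul_assoc]
  apply mul_le_mul_of_nonneg_left _ (by positivity)
  rw [← Real.exp_add]
  apply Real.exp_le_exp.mpr
  have hσ2 : (0:ℝ) < σ ^ 2 := by positivity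
  rw [div_add_div _ _ (by norm_num) (by positivity)]
  rw [div_le_div_iff₀ (by positivity) (by positivity)]
  nlinarith [sq_nonneg (x - κ), sq_nonneg σ, mul_pos hσ2 hσ2,
    mul_nonneg (mul_nonneg hb.le hσ.le) (sub_nonneg.mpr hx)]

end Auxiliary

/-- Proposition 7.3: if `κ > bσ` then every measurable estimator `T` of the quadratic
functional satisfies
`sup_{θ ∈ B_2(κ) ∩ B_0(1)} P_θ(|T(y) − Q(θ)| ≥ (3b/8)σκ) ≥ (1/4) exp(−b²/4)`. -/
theorem quadratic_functional_prob_lower_one_sparse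
    (b : ℝ) (hb : 0 < b) (d : ℕ) (hd : 1 ≤ d) (κ σ : ℝ) (hκ : 0 < κ) (hσ : 0 < σ)
    (hbσκ : b * σ < κ) :
    ∀ T : (Fin d → ℝ) → ℝ, Measurable T →
      ENNReal.ofReal ((1 / 4) * Real.exp (-b ^ 2 / 4))
        ≤ ⨆ θ ∈ B2 d κ ∩ B0 d 1,
            gaussPi d σ θ {y | (3 * b / 8) * σ * κ ≤ |T y - ∑ j, (θ j) ^ 2|} := by
  intro T hT
  have hv : Real.toNNReal (σ ^ 2) ≠ 0 := by
    simp [Real.toNNReal_eq_zero, not_le, pow_pos hσ, hσ.ne']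
  set v := Real.toNNReal (σ ^ 2) with hv_def
  have hi0 : 0 < d := hd
  set i0 : Fin d := ⟨0, hi0⟩ with hi0_def
  set Δ : ℝ := b * σ / 2 with hΔ_def
  set cc : ℝ := (3 * b / 8) * σ * κ with hcc_def
  have hΔpos : 0 < Δ := by positivity
  have hΔκ : Δ < κ := by
    have : 0 < b * σ := by positivity
    simp only [hΔ_def]
    linarith
  set θ₀ : Fin d → ℝ := fun j => if j = i0 then κ else 0 with hθ₀_def
  set θ₁ : Fin d → ℝ := fun j => if j = i0 then κ - Δ else 0 with hθ₁_def
  -- sums of squares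
  have hsq : ∀ a : ℝ, ∀ j : Fin d, ((if j = i0 then a else 0) : ℝ) ^ 2
      = if j = i0 then a ^ 2 else 0 := by
    intro a j; split <;> simp
  have hsum : ∀ a : ℝ, ∑ j, ((if j = i0 then a else 0) : ℝ) ^ 2 = a ^ 2 := by
    intro a
    simp_rw [hsq a]
    rw [Finset.sum_ite_eq' Finset.univ i0 (fun _ => a ^ 2)]
    simp
  -- membership
  have hmem : ∀ a : ℝ, a ^ 2 ≤ κ ^ 2 →
      (fun j => if j = i0 then a else 0) ∈ B2 d κ ∩ B0 d 1 := by
    intro a ha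
    constructor
    · show (fun j => if j = i0 then a else 0) ∈ B2 d κ
      simp only [B2, Set.mem_setOf_eq]
      simpa only [hsum a] using ha
    · show Nat.card {j // (if j = i0 then a else 0) ≠ 0} ≤ 1
      rw [Finite.card_le_one_iff_subsingleton]
      constructor
      rintro ⟨j, hj⟩ ⟨k, hk⟩
      have hj' : j = i0 := by by_contra h; rw [if_neg h] at hj; exact hj rfl
      have hk' : k = i0 := by by_contra h; rw [if_neg h] at hk; exact hk rfl
      subst hj'; subst hk'; rfl
  have hmem₀ : θ₀ ∈ B2 d κ ∩ B0 d 1 := hmem κ le_rfl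
  have hmem₁ : θ₁ ∈ B2 d κ ∩ B0 d 1 := by
    refine hmem (κ - Δ) ?_
    nlinarith
  -- events
  set A₀ : Set (Fin d → ℝ) := {y | cc ≤ |T y - κ ^ 2|} with hA₀_def
  set A₁ : Set (Fin d → ℝ) := {y | cc ≤ |T y - (κ - Δ) ^ 2|} with hA₁_def
  set S : Set (Fin d → ℝ) := {y | y i0 ≤ κ} with hS_def
  have hA₀m : MeasurableSet A₀ :=
    measurableSet_le measurable_const ((hT.sub measurable_const).abs)
  have hA₁m : MeasurableSet A₁ :=
    measurableSet_le measurable_const ((hT.sub measurable_const).abs)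
  have hSm : MeasurableSet S := measurableSet_le (measurable_pi_apply i0) measurable_const
  -- the two events cover everything
  have hcover : ∀ y, y ∉ A₀ → y ∈ A₁ := by
    intro y hy0
    by_contra hy1
    rw [hA₀_def, Set.mem_setOf_eq, not_le] at hy0
    rw [hA₁_def, Set.mem_setOf_eq, not_le] at hy1
    have hkey : κ ^ 2 - (κ - Δ) ^ 2 ≤ |T y - (κ - Δ) ^ 2| + |T y - κ ^ 2| := by
      have h1 : κ ^ 2 - (κ - Δ) ^ 2 = (T y - (κ - Δ) ^ 2) - (T y - κ ^ 2) := by ring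
      calc κ ^ 2 - (κ - Δ) ^ 2 ≤ |(T y - (κ - Δ) ^ 2) - (T y - κ ^ 2)| := by
            rw [← h1]; exact le_abs_self _
        _ ≤ |T y - (κ - Δ) ^ 2| + |T y - κ ^ 2| := abs_sub _ _
    have hbσ : 0 < b * σ := by positivity
    nlinarith [mul_pos hbσ (sub_pos.mpr hbσκ)]
  -- probability measure instances
  haveI hP₀ : IsProbabilityMeasure (gaussPi d σ θ₀) := by
    unfold gaussPi; infer_instance
  haveI hP₁ : IsProbabilityMeasure (gaussPi d σ θ₁) := by
    unfold gaussPi; infer_instance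
  -- half-space probability
  have hSc : gaussPi d σ θ₀ Sᶜ = 1 / 2 := by
    have hset : Sᶜ = Set.univ.pi (fun j => if j = i0 then Set.Ioi κ else Set.univ) := by
      ext y
      simp only [Set.mem_compl_iff, hS_def, Set.mem_setOf_eq, not_le, Set.mem_pi,
        Set.mem_univ, true_implies]
      constructor
      · intro h j
        by_cases hj : j = i0
        · subst hj; simpa using h
        · simp [hj]
      · intro h
        have := h i0
        simpa using this
    rw [hset]
    show (Measure.pi fun j => gaussianReal (θ₀ j) v) _ = 1 / 2
    rw [Measure.pi_pi]
    rw [Finset.prod_eq_single i0 ?_ ?_]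
    · simp only [if_pos rfl, hθ₀_def]
      exact gaussianReal_Ioi_self κ hv
    · intro j _ hj
      simp [if_neg hj]
    · intro h
      exact absurd (Finset.mem_univ i0) h
  -- comparison of the two measures on subsets of S
  have hcomp : ∀ E : Set (Fin d → ℝ), MeasurableSet E → E ⊆ S →
      ENNReal.ofReal (Real.exp (-b ^ 2 / 8)) * gaussPi d σ θ₀ E ≤ gaussPi d σ θ₁ E := by
    intro E hE hES
    rw [gaussPi_withDensity d hσ θ₀, gaussPi_withDensity d hσ θ₁,
      withDensity_apply _ hE, withDensity_apply _ hE]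
    rw [← lintegral_const_mul _ (Finset.measurable_prod _ fun j _ => by
      exact (measurable_gaussianPDF _ _).comp (measurable_pi_apply j))]
    refine setLIntegral_mono (Finset.measurable_prod _ fun j _ => by
      exact (measurable_gaussianPDF _ _).comp (measurable_pi_apply j)) ?_
    intro y hy
    have hyS : y i0 ≤ κ := hES hy
    rw [← Finset.mul_prod_erase Finset.univ
        (fun j => gaussianPDF (θ₀ j) v (y j)) (Finset.mem_univ i0),
      ← Finset.mul_prod_erase Finset.univ
        (fun j => gaussianPDF (θ₁ j) v (y j)) (Finset.mem_univ i0)]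
    have hprod_eq : ∏ j ∈ Finset.univ.erase i0, gaussianPDF (θ₀ j) v (y j)
        = ∏ j ∈ Finset.univ.erase i0, gaussianPDF (θ₁ j) v (y j) := by
      refine Finset.prod_congr rfl fun j hj => ?_
      have hj' : j ≠ i0 := Finset.ne_of_mem_erase hj
      simp only [hθ₀_def, hθ₁_def, if_neg hj']
    rw [hprod_eq, ← mul_assoc]
    refine mul_le_mul_left ?_ _
    have h0 : θ₀ i0 = κ := by simp [hθ₀_def]
    have h1 : θ₁ i0 = κ - Δ := by simp [hθ₁_def]
    rw [h0, h1, hΔ_def]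
    exact pdf_compare hb hσ hyS
  -- ENNReal constants
  have h14 : ENNReal.ofReal (1 / 4 : ℝ) = 1 / 4 := by
    rw [ENNReal.ofReal_div_of_pos (by norm_num)]
    norm_num
  have hexp1 : Real.exp (-b ^ 2 / 4) ≤ 1 := by
    rw [← Real.exp_zero]
    exact Real.exp_le_exp.mpr (by nlinarith [sq_nonneg b])
  by_cases hc1 : gaussPi d σ θ₀ A₀ < 1 / 4
  · -- main case: P₀(A₀) < 1/4
    have hsub : A₀ᶜ ⊆ A₁ := fun y hy => hcover y hy
    have h₁ : (3 : ℝ≥0∞) / 4 ≤ gaussPi d σ θ₀ A₁ := by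
      calc (3 : ℝ≥0∞) / 4 = 1 - 1 / 4 := ennreal_one_sub_quarter.symm
        _ ≤ 1 - gaussPi d σ θ₀ A₀ := tsub_le_tsub_left hc1.le 1
        _ = gaussPi d σ θ₀ A₀ᶜ := (prob_compl_eq_one_sub hA₀m).symm
        _ ≤ gaussPi d σ θ₀ A₁ := measure_mono hsub
    have h₂ : (1 : ℝ≥0∞) / 4 ≤ gaussPi d σ θ₀ (A₁ ∩ S) := by
      have hAsub : A₁ ⊆ (A₁ ∩ S) ∪ Sᶜ := by
        intro y hy
        by_cases hyS : y ∈ S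
        · exact Or.inl ⟨hy, hyS⟩
        · exact Or.inr hyS
      have hle : gaussPi d σ θ₀ A₁ ≤ gaussPi d σ θ₀ (A₁ ∩ S) + gaussPi d σ θ₀ Sᶜ :=
        (measure_mono hAsub).trans (measure_union_le _ _)
      rw [hSc] at hle
      have hchain := h₁.trans hle
      rw [ennreal_three_quarters] at hchain
      exact (ENNReal.add_le_add_iff_right
        (ennreal_div_ne_top _ _ (by norm_num) (by norm_num))).mp hchain
    have h₃ : ENNReal.ofReal (Real.exp (-b ^ 2 / 8)) * (1 / 4) ≤ gaussPi d σ θ₁ A₁ := by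
      calc ENNReal.ofReal (Real.exp (-b ^ 2 / 8)) * (1 / 4)
          ≤ ENNReal.ofReal (Real.exp (-b ^ 2 / 8)) * gaussPi d σ θ₀ (A₁ ∩ S) :=
            mul_le_mul_right h₂ _
        _ ≤ gaussPi d σ θ₁ (A₁ ∩ S) := hcomp _ (hA₁m.inter hSm) Set.inter_subset_right
        _ ≤ gaussPi d σ θ₁ A₁ := measure_mono Set.inter_subset_left
    refine le_iSup₂_of_le θ₁ hmem₁ ?_
    have hsum₁ : ∑ j, (θ₁ j) ^ 2 = (κ - Δ) ^ 2 := by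
      rw [hθ₁_def]
      simpa using hsum (κ - Δ)
    rw [hsum₁]
    refine le_trans ?_ h₃
    rw [← h14, ← ENNReal.ofReal_mul (Real.exp_nonneg _)]
    apply ENNReal.ofReal_le_ofReal
    rw [mul_comm (Real.exp (-b ^ 2 / 8))]
    apply mul_le_mul_of_nonneg_left _ (by norm_num)
    exact Real.exp_le_exp.mpr (by nlinarith [sq_nonneg b])
  · -- easy case: P₀(A₀) ≥ 1/4
    push_neg at hc1
    refine le_iSup₂_of_le θ₀ hmem₀ ?_
    have hsum₀ : ∑ j, (θ₀ j) ^ 2 = κ ^ 2 := by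
      rw [hθ₀_def]
      simpa using hsum κ
    rw [hsum₀]
    refine le_trans ?_ (hc1.trans (le_refl _))
    calc ENNReal.ofReal ((1 / 4) * Real.exp (-b ^ 2 / 4))
        ≤ ENNReal.ofReal (1 / 4) := ENNReal.ofReal_le_ofReal
          (by nlinarith [Real.exp_nonneg (-b ^ 2 / 4)])
      _ = 1 / 4 := h14
end
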